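/- Let n!·2^{4m}·((1/12)·n^{−1/(3−k/n)})^m with m = 3n−3−k and 3 ≤ k ≤ n. Then this quantity is at most n^{O(1)}·((4/3)^3/e)^n, and in particular tends to 0 as n → ∞. -/

import Mathlib

open Real Filter

private lemma fact_stirling : ∀ n : ℕ, 1 ≤ n →
    (n.factorial : ℝ) * (Real.exp 1) ^ n ≤ Real.exp 1 * (n : ℝ) ^ (n + 1) := by
  intro n hn
  induction n with
  | zero => omega
  | succ n ih =>
    rcases Nat.eq_zero_or_pos n with h0 | h1
    · subst h0; simp [Nat.factorial]
    · have hn0 : (0:ℝ) < n := by exact_mod_cast h1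
      have hstep : Real.exp 1 * (n:ℝ) ^ (n+1) ≤ ((n:ℝ)+1) ^ (n+1) := by
        have h1e : Real.exp (1/((n:ℝ)+1)) ≤ ((n:ℝ)+1)/n := by
          have h := Real.add_one_le_exp (-(1/((n:ℝ)+1)))
          have hpos : (0:ℝ) < (n:ℝ)+1 := by linarith
          have h2 : (n:ℝ)/((n:ℝ)+1) ≤ Real.exp (-(1/((n:ℝ)+1))) := by
            have : -(1/((n:ℝ)+1)) + 1 = (n:ℝ)/((n:ℝ)+1) := by field_simp; ring
            linarith [this ▸ h]
          rw [Real.exp_neg] at h2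
          have hexp : (0:ℝ) < Real.exp (1/((n:ℝ)+1)) := Real.exp_pos _
          have h3 : Real.exp (1/((n:ℝ)+1)) * ((n:ℝ)/((n:ℝ)+1)) ≤ 1 := by
            calc Real.exp (1/((n:ℝ)+1)) * ((n:ℝ)/((n:ℝ)+1))
                ≤ Real.exp (1/((n:ℝ)+1)) * (Real.exp (1/((n:ℝ)+1)))⁻¹ :=
                  mul_le_mul_of_nonneg_left h2 hexp.le
              _ = 1 := mul_inv_cancel₀ hexp.ne'
          have hdd : (n:ℝ)/((n:ℝ)+1) * ((n:ℝ)+1) = n := div_mul_cancel₀ _ (by linarith)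
          rw [le_div_iff₀ hn0]
          nlinarith [h3, hdd, hexp, hpos]
        have hpow : Real.exp (1/((n:ℝ)+1)) ^ (n+1) = Real.exp 1 := by
          rw [← Real.exp_nat_mul]
          congr 1
          field_simp
          push_cast
          ring
        have : Real.exp 1 ≤ (((n:ℝ)+1)/n) ^ (n+1) := by
          rw [← hpow]
          exact pow_le_pow_left₀ (Real.exp_pos _).le h1e _
        have hnn : (0:ℝ) < (n:ℝ) ^ (n+1) := by positivity
        calc Real.exp 1 * (n:ℝ) ^ (n+1) ≤ (((n:ℝ)+1)/n) ^ (n+1) * (n:ℝ) ^ (n+1) := by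
              exact mul_le_mul_of_nonneg_right this hnn.le
          _ = ((n:ℝ)+1) ^ (n+1) := by
              rw [div_pow, div_mul_cancel₀]
              exact hnn.ne'
      have ih' := ih h1
      have he : (0:ℝ) < Real.exp 1 := Real.exp_pos 1
      have hcast : ((n+1 : ℕ) : ℝ) = (n:ℝ) + 1 := by push_cast; ring
      calc ((n+1).factorial : ℝ) * Real.exp 1 ^ (n+1)
          = ((n:ℝ)+1) * Real.exp 1 * ((n.factorial : ℝ) * Real.exp 1 ^ n) := by
            rw [Nat.factorial_succ]; push_cast; ring
        _ ≤ ((n:ℝ)+1) * Real.exp 1 * (Real.exp 1 * (n:ℝ) ^ (n+1)) := by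
            have hpos : (0:ℝ) ≤ ((n:ℝ)+1) * Real.exp 1 := by positivity
            exact mul_le_mul_of_nonneg_left ih' hpos
        _ ≤ ((n:ℝ)+1) * Real.exp 1 * ((n:ℝ)+1) ^ (n+1) := by
            have hpos : (0:ℝ) ≤ ((n:ℝ)+1) * Real.exp 1 := by positivity
            exact mul_le_mul_of_nonneg_left hstep hpos
        _ = Real.exp 1 * (((n+1:ℕ):ℝ)) ^ (n+1+1) := by
            rw [hcast]; ring

/-- With `m = 3n - 3 - k` and `3 ≤ k ≤ n`, the quantity
`n!·2^(4m)·((1/12)·n^(-1/(3-k/n)))^m` is at most `n^{O(1)}·((4/3)^3/e)^n`,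
and in particular tends to `0` as `n → ∞`. -/
theorem stmt_6 (k : ℕ → ℕ) (hk : ∀ n, 3 ≤ n → 3 ≤ k n ∧ k n ≤ n) :
    (∃ C : ℝ, 0 < C ∧ ∀ n : ℕ, 3 ≤ n →
      (n.factorial : ℝ) * 2 ^ (4 * (3 * n - 3 - k n)) *
          ((1 / 12) * (n : ℝ) ^ (-(1 / (3 - (k n : ℝ) / n)))) ^ (3 * n - 3 - k n)
        ≤ C * (n : ℝ) ^ C * ((4 / 3 : ℝ) ^ (3 : ℕ) / Real.exp 1) ^ n) ∧
    Filter.Tendsto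
      (fun n : ℕ => (n.factorial : ℝ) * 2 ^ (4 * (3 * n - 3 - k n)) *
        ((1 / 12) * (n : ℝ) ^ (-(1 / (3 - (k n : ℝ) / n)))) ^ (3 * n - 3 - k n))
      Filter.atTop (nhds 0) := by
  set r : ℝ := (4/3 : ℝ) ^ (3:ℕ) / Real.exp 1 with hr_def
  have he : (0:ℝ) < Real.exp 1 := Real.exp_pos 1
  have hr0 : 0 ≤ r := by positivity
  have hr1 : r < 1 := by
    rw [hr_def, div_lt_one he]
    nlinarith [Real.exp_one_gt_d9]
  -- key bound
  have key : ∀ n : ℕ, 3 ≤ n →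
      (n.factorial : ℝ) * 2 ^ (4 * (3 * n - 3 - k n)) *
        ((1 / 12) * (n : ℝ) ^ (-(1 / (3 - (k n : ℝ) / n)))) ^ (3 * n - 3 - k n)
      ≤ (n:ℝ) ^ (4:ℕ) * r ^ n := by
    intro n hn3
    obtain ⟨hk3, hkn⟩ := hk n hn3
    set m : ℕ := 3 * n - 3 - k n with hm_def
    have hN3 : (3:ℝ) ≤ (n:ℝ) := by exact_mod_cast hn3
    have hN0 : (0:ℝ) < (n:ℝ) := by linarith
    have hN1 : (1:ℝ) ≤ (n:ℝ) := by linarith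
    have hKn : (k n : ℝ) ≤ (n:ℝ) := by exact_mod_cast hkn
    have hK0 : (0:ℝ) ≤ (k n : ℝ) := by positivity
    have hmcast : (m:ℝ) = 3*(n:ℝ) - 3 - (k n : ℝ) := by
      have h : m + (3 + k n) = 3 * n := by omega
      have := congrArg (fun x : ℕ => (x:ℝ)) h
      push_cast at this
      linarith
    set D : ℝ := 3 - (k n : ℝ) / n with hD_def
    have hD0 : 0 < D := by
      have : (k n : ℝ) / n ≤ 1 := by
        rw [div_le_one hN0]; exact hKn
      rw [hD_def]; linarith
    set t : ℝ := -(1 / D) with ht_def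
    -- rewrite the LHS
    have hrw : (n.factorial : ℝ) * 2 ^ (4 * m) * ((1 / 12) * (n:ℝ) ^ t) ^ m
        = (n.factorial : ℝ) * ((4/3:ℝ) ^ m * (n:ℝ) ^ (t * m)) := by
      have h16 : (2:ℝ) ^ (4 * m) = 16 ^ m := by rw [pow_mul]; norm_num
      rw [h16, mul_pow, ← Real.rpow_natCast ((n:ℝ) ^ t) m, ← Real.rpow_mul hN0.le]
      have h43 : (16:ℝ) ^ m * ((1/12:ℝ)) ^ m = (4/3:ℝ) ^ m := by
        rw [← mul_pow]; norm_num
      linear_combination ((n.factorial : ℝ) * (n:ℝ) ^ (t * (m:ℝ))) * h43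
    rw [hrw]
    -- factorial bound
    have hfact : (n.factorial : ℝ) ≤ (n:ℝ)^(2:ℕ) * (n:ℝ)^n / Real.exp 1 ^ n := by
      have h := fact_stirling n (by omega)
      have he3 : Real.exp 1 ≤ 3 := by nlinarith [Real.exp_one_lt_d9]
      have h2 : Real.exp 1 * (n:ℝ)^(n+1) ≤ (n:ℝ)^(2:ℕ) * (n:ℝ)^n := by
        have : Real.exp 1 * (n:ℝ)^(n+1) = (Real.exp 1 * (n:ℝ)) * (n:ℝ)^n := by ring
        rw [this, show ((n:ℝ)^(2:ℕ) : ℝ) = (n:ℝ) * (n:ℝ) by ring]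
        have : Real.exp 1 * (n:ℝ) ≤ (n:ℝ) * (n:ℝ) := by nlinarith
        exact mul_le_mul_of_nonneg_right this (by positivity)
      rw [le_div_iff₀ (by positivity)]
      linarith
    -- exponent bound : n + t*m ≤ 2
    have hexp : (n:ℝ) + t * m ≤ 2 := by
      have hdiv : (k n : ℝ)/n * n = k n := div_mul_cancel₀ _ hN0.ne'
      have h1 : ((n:ℝ) - 2) * D ≤ (m:ℝ) := by
        rw [hmcast, hD_def]
        have hkn1 : (k n : ℝ)/n ≤ 1 := by rw [div_le_one hN0]; exact hKn
        have hkn0 : 0 ≤ (k n : ℝ)/n := by positivity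
        nlinarith [hdiv, hkn1, hkn0]
      have h2 : (n:ℝ) - 2 ≤ (m:ℝ) / D := (le_div_iff₀ hD0).mpr h1
      have h3 : t * m = -((m:ℝ)/D) := by rw [ht_def]; ring
      linarith [h3 ▸ (by linarith : -((m:ℝ)/D) ≤ -((n:ℝ) - 2))]
    -- combine
    have hpowm : ((4/3:ℝ)) ^ m ≤ (4/3:ℝ) ^ (3*n) := by
      apply pow_le_pow_right₀ (by norm_num)
      omega
    have hrpow : (n:ℝ)^n * (n:ℝ) ^ (t * m) ≤ (n:ℝ)^(2:ℕ) := by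
      have : (n:ℝ)^n * (n:ℝ) ^ (t * m) = (n:ℝ) ^ ((n:ℝ) + t * m) := by
        rw [Real.rpow_add hN0, Real.rpow_natCast]
      rw [this, show ((n:ℝ)^(2:ℕ) : ℝ) = (n:ℝ) ^ ((2:ℕ):ℝ) from (Real.rpow_natCast _ 2).symm]
      exact Real.rpow_le_rpow_of_exponent_le hN1 (by exact_mod_cast hexp)
    have hrpow_nonneg : 0 ≤ (n:ℝ) ^ (t * m) := Real.rpow_nonneg hN0.le _
    calc (n.factorial : ℝ) * ((4/3:ℝ) ^ m * (n:ℝ) ^ (t * m))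
        ≤ ((n:ℝ)^(2:ℕ) * (n:ℝ)^n / Real.exp 1 ^ n) * ((4/3:ℝ) ^ (3*n) * (n:ℝ) ^ (t * m)) := by
          apply mul_le_mul hfact
          · exact mul_le_mul_of_nonneg_right hpowm hrpow_nonneg
          · positivity
          · positivity
      _ = (n:ℝ)^(2:ℕ) * ((4/3:ℝ) ^ (3*n) / Real.exp 1 ^ n) * ((n:ℝ)^n * (n:ℝ) ^ (t * m)) := by
          ring
      _ ≤ (n:ℝ)^(2:ℕ) * ((4/3:ℝ) ^ (3*n) / Real.exp 1 ^ n) * (n:ℝ)^(2:ℕ) := by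
          apply mul_le_mul_of_nonneg_left hrpow
          positivity
      _ = (n:ℝ) ^ (4:ℕ) * r ^ n := by
          have e1 : ((4/3:ℝ)) ^ (3*n) = (((4/3:ℝ)) ^ (3:ℕ)) ^ n := pow_mul _ 3 n
          rw [e1, hr_def]
          ring
  refine ⟨⟨4, by norm_num, fun n hn => ?_⟩, ?_⟩
  · have h := key n hn
    have hN0 : (0:ℝ) < (n:ℝ) := by exact_mod_cast (by omega : 0 < n)
    have h4 : (n:ℝ) ^ (4:ℝ) = (n:ℝ) ^ (4:ℕ) := by
      rw [show (4:ℝ) = ((4:ℕ):ℝ) by norm_num, Real.rpow_natCast]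
    calc _ ≤ (n:ℝ) ^ (4:ℕ) * r ^ n := h
      _ ≤ 4 * (n:ℝ) ^ (4:ℝ) * r ^ n := by
          rw [h4]
          nlinarith [pow_nonneg hN0.le 4, pow_nonneg hr0 n,
            mul_nonneg (pow_nonneg hN0.le 4) (pow_nonneg hr0 n)]
  · apply squeeze_zero' (g := fun n : ℕ => 4 * ((n:ℝ) ^ (4:ℕ) * r ^ n))
    · filter_upwards [eventually_ge_atTop 3] with n hn
      positivity
    · filter_upwards [eventually_ge_atTop 3] with n hn
      have h := key n hn
      nlinarith [key n hn, pow_nonneg (by positivity : (0:ℝ) ≤ (n:ℝ)) 4, pow_nonneg hr0 n]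
    · have := (tendsto_pow_const_mul_const_pow_of_lt_one 4 hr0 hr1).const_mul (4:ℝ)
      simpa using this
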